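/- For any parameters f ∈ (0,1) and κ, γ₁, γ₂, γ₃ > 0, the polynomial φ(x) = γ₃·κ·x⁴ + (f·γ₂·(1+γ₁) + 1 − γ₃)·κ·x³ + (γ₃ − κ − f·γ₂·κ)·x² + (1−γ₃)·x − 1 has exactly one real root in the open interval (1/(1+γ₁), 1). -/

import Mathlib

/-- The quartic polynomial φ whose roots in S₃ correspond to steady states of
the ZIP regulatory system. -/
noncomputable def zipPhi (κ γ₁ γ₂ γ₃ f : ℝ) (x : ℝ) : ℝ :=
  γ₃ * κ * x ^ 4 + (f * γ₂ * (1 + γ₁) + 1 - γ₃) * κ * x ^ 3 +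
    (γ₃ - κ - f * γ₂ * κ) * x ^ 2 + (1 - γ₃) * x - 1

/-- Key factorization identity for φ. -/
lemma zipPhi_id (κ γ₁ γ₂ γ₃ f x : ℝ) :
    zipPhi κ γ₁ γ₂ γ₃ f x =
      (κ * x ^ 2 + 1) * ((x - 1) * (γ₃ * x + 1)) +
        f * γ₂ * κ * (x ^ 2 * ((1 + γ₁) * x - 1)) := by
  unfold zipPhi; ring

/-- Two distinct roots in the interval are impossible. -/
lemma zipPhi_key (κ γ₁ γ₂ γ₃ f x y : ℝ) (hκ : 0 < κ) (hγ₁ : 0 < γ₁)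
    (hγ₂ : 0 < γ₂) (hγ₃ : 0 < γ₃) (hf0 : 0 < f)
    (hx : 1 / (1 + γ₁) < x) (hxy : x < y) (hy1 : y < 1)
    (hpx : zipPhi κ γ₁ γ₂ γ₃ f x = 0) (hpy : zipPhi κ γ₁ γ₂ γ₃ f y = 0) :
    False := by
  have hs : (0:ℝ) < 1 + γ₁ := by linarith
  have hxpos : 0 < x := lt_trans (by positivity) hx
  have hypos : 0 < y := lt_trans hxpos hxy
  have hx1 : x < 1 := lt_trans hxy hy1
  have hNx : 0 < (1 + γ₁) * x - 1 := by
    rw [div_lt_iff₀ hs] at hx; nlinarith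
  have hNy : 0 < (1 + γ₁) * y - 1 := by nlinarith
  have eqx : f * γ₂ * κ * (x ^ 2 * ((1 + γ₁) * x - 1)) =
      (κ * x ^ 2 + 1) * ((1 - x) * (γ₃ * x + 1)) := by
    have h := zipPhi_id κ γ₁ γ₂ γ₃ f x
    rw [hpx] at h; linarith [h]
  have eqy : f * γ₂ * κ * (y ^ 2 * ((1 + γ₁) * y - 1)) =
      (κ * y ^ 2 + 1) * ((1 - y) * (γ₃ * y + 1)) := by
    have h := zipPhi_id κ γ₁ γ₂ γ₃ f y
    rw [hpy] at h; linarith [h]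
  have hmain : (κ * x ^ 2 + 1) * ((1 - x) * (γ₃ * x + 1)) *
      (y ^ 2 * ((1 + γ₁) * y - 1)) =
      (κ * y ^ 2 + 1) * ((1 - y) * (γ₃ * y + 1)) *
      (x ^ 2 * ((1 + γ₁) * x - 1)) := by
    linear_combination (x ^ 2 * ((1 + γ₁) * x - 1)) * eqy -
      (y ^ 2 * ((1 + γ₁) * y - 1)) * eqx
  have h2 : x ^ 2 * (κ * y ^ 2 + 1) < y ^ 2 * (κ * x ^ 2 + 1) := by nlinarith
  have h3 : ((1 + γ₁) * x - 1) * ((1 - y) * (γ₃ * y + 1)) <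
      ((1 + γ₁) * y - 1) * ((1 - x) * (γ₃ * x + 1)) := by
    nlinarith [mul_pos (sub_pos.2 hxy) hγ₁,
      mul_pos (sub_pos.2 hxy) (mul_pos hγ₃ (mul_pos (mul_pos hγ₁ hxpos) hypos)),
      mul_pos (sub_pos.2 hxy)
        (mul_pos hγ₃ (mul_pos (sub_pos.2 hx1) (sub_pos.2 hy1)))]
  have h4 := mul_lt_mul'' h2 h3 (by positivity)
    (mul_nonneg hNx.le (mul_nonneg (by linarith) (by positivity)))
  linarith [h4, hmain]

/-- φ has exactly one real root in the open interval
(1/(1+γ₁), 1). -/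
theorem zipPhi_unique_root
    (κ γ₁ γ₂ γ₃ f : ℝ) (hκ : 0 < κ) (hγ₁ : 0 < γ₁) (hγ₂ : 0 < γ₂) (hγ₃ : 0 < γ₃)
    (hf : f ∈ Set.Ioo (0 : ℝ) 1) :
    ∃! x : ℝ, x ∈ Set.Ioo (1 / (1 + γ₁)) 1 ∧ zipPhi κ γ₁ γ₂ γ₃ f x = 0 := by
  obtain ⟨hf0, hf1⟩ := hf
  have hs : (0:ℝ) < 1 + γ₁ := by linarith
  have hsne : (1 + γ₁) ≠ 0 := ne_of_gt hs
  set a : ℝ := 1 / (1 + γ₁) with ha_def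
  have hapos : 0 < a := by positivity
  have ha1 : a < 1 := by
    rw [ha_def, div_lt_one hs]; linarith
  have hNa : (1 + γ₁) * a - 1 = 0 := by
    rw [ha_def]; field_simp; ring
  have hφa : zipPhi κ γ₁ γ₂ γ₃ f a < 0 := by
    rw [zipPhi_id, hNa]
    have h1 : (κ * a ^ 2 + 1) * ((a - 1) * (γ₃ * a + 1)) < 0 := by
      apply mul_neg_of_pos_of_neg (by positivity)
      apply mul_neg_of_neg_of_pos (by linarith) (by positivity)
    nlinarith [h1]
  have hφ1 : 0 < zipPhi κ γ₁ γ₂ γ₃ f 1 := by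
    have : zipPhi κ γ₁ γ₂ γ₃ f 1 = f * γ₂ * γ₁ * κ := by unfold zipPhi; ring
    rw [this]; positivity
  have hcont : ContinuousOn (zipPhi κ γ₁ γ₂ γ₃ f) (Set.Icc a 1) := by
    apply Continuous.continuousOn
    unfold zipPhi; fun_prop
  have hivt := intermediate_value_Ioo (le_of_lt ha1) hcont
  have h0mem : (0:ℝ) ∈ Set.Ioo (zipPhi κ γ₁ γ₂ γ₃ f a) (zipPhi κ γ₁ γ₂ γ₃ f 1) :=
    ⟨hφa, hφ1⟩
  obtain ⟨x, hxmem, hx0⟩ := hivt h0mem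
  refine ⟨x, ⟨hxmem, hx0⟩, ?_⟩
  rintro y ⟨hymem, hy0⟩
  by_contra hne
  rcases lt_or_gt_of_ne hne with h | h
  · exact zipPhi_key κ γ₁ γ₂ γ₃ f y x hκ hγ₁ hγ₂ hγ₃ hf0 hymem.1 h hxmem.2 hy0 hx0
  · exact zipPhi_key κ γ₁ γ₂ γ₃ f x y hκ hγ₁ hγ₂ hγ₃ hf0 hxmem.1 h hymem.2 hx0 hy0
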